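/- Let 𝔄 be a unital C*-algebra, and let A₁, A₂ ∈ 𝔄 be self-adjoint elements such that A₁A₂ = A₂A₁ and A₂ = U A₁ U* for some unitary U ∈ 𝔄. Then A₁ − A₂ is an abelian self-commutator in 𝔄, i.e. there exists X ∈ 𝔄 such that (X X*)(X* X) = (X* X)(X X*) and A₁ − A₂ = X X* − X* X. -/
import Mathlib

/-- In a unital C*-algebra, if `A₁, A₂` are commuting self-adjoint elements
that are unitarily equivalent, then `A₁ - A₂` is an abelian self-commutator. -/
theorem commuting_unitarily_equivalent_difference_is_abelian_self_commutator
    {𝔄 : Type*} [NormedRing 𝔄] [StarRing 𝔄] [CStarRing 𝔄]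
    [NormedAlgebra ℂ 𝔄] [StarModule ℂ 𝔄] [CompleteSpace 𝔄]
    (A₁ A₂ : 𝔄) (hA₁ : A₁ = star A₁) (hA₂ : A₂ = star A₂)
    (hcomm : A₁ * A₂ = A₂ * A₁)
    (U : 𝔄) (hU₁ : U * star U = 1) (hU₂ : star U * U = 1)
    (hUA : A₂ = U * A₁ * star U) :
    ∃ X : 𝔄, (X * star X) * (star X * X) = (star X * X) * (X * star X) ∧
      A₁ - A₂ = X * star X - star X * X := by
  have hsa : IsSelfAdjoint A₁ := hA₁.symm
  letI : CStarAlgebra 𝔄 := ⟨⟩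
  letI := CStarAlgebra.spectralOrder 𝔄
  letI := CStarAlgebra.spectralOrderedRing 𝔄
  set c : 𝔄 := algebraMap ℝ 𝔄 ‖A₁‖ with hc
  have hcc : ∀ b : 𝔄, c * b = b * c := fun b => (Algebra.commutes' ‖A₁‖ b)
  set a : 𝔄 := A₁ + c with ha
  have ha_nonneg : (0 : 𝔄) ≤ a := by
    have := hsa.neg_algebraMap_norm_le_self
    rw [neg_le_iff_add_nonneg] at this
    exact this
  set P : 𝔄 := CFC.sqrt a with hP
  have hP2 : P * P = a := by
    have := CFC.sq_sqrt a ha_nonneg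
    rwa [sq] at this
  have hPsa : star P = P := (IsSelfAdjoint.of_nonneg (CFC.sqrt_nonneg (a := a)))
  have hXX : P * star U * star (P * star U) = a := by
    rw [star_mul, star_star, hPsa, mul_assoc, ← mul_assoc (star U), hU₂, one_mul, hP2]
  have hXX' : star (P * star U) * (P * star U) = A₂ + c := by
    rw [star_mul, star_star, hPsa]
    have h1 : U * P * (P * star U) = U * a * star U := by
      rw [mul_assoc, ← mul_assoc P, hP2, ← mul_assoc]
    rw [h1, ha, mul_add, add_mul, ← hUA, ← hcc U, mul_assoc c U (star U), hU₁, mul_one]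
  refine ⟨P * star U, ?_, ?_⟩
  · rw [hXX, hXX', ha, add_mul, add_mul, mul_add, mul_add, mul_add, mul_add,
      hcomm, hcc A₂, hcc A₁]
    abel
  · rw [hXX, hXX', ha]
    abel
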